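/- For every pair of integers q > r ≥ 1 and every edge e of the complete r-graph K^r_{q+r} on q+r vertices, there exists an integer vector Ψ indexed by the q-subsets Q of [q+r] such that for every r-subset e' of [q+r], the sum of Ψ_Q over all q-subsets Q containing e' equals N·1_{e'=e}, where N = q(q-1)···(q-r+1), and moreover every entry satisfies |Ψ_Q| ≤ 2^q · r!. -/

import Mathlib

open Finset

private def cc (q r a : ℕ) : ℤ :=
  (-1) ^ (r - a) * a.factorial * ((q - 1 - a).descFactorial (r - a))

private lemma dF_add (n a b : ℕ) :
    n.descFactorial (a + b) = n.descFactorial a * (n - a).descFactorial b := by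
  induction b with
  | zero => simp
  | succ b ih =>
      have h : n - (a + b) = n - a - b := by omega
      rw [← Nat.add_assoc, Nat.descFactorial_succ, ih, Nat.descFactorial_succ, h]
      ring

private lemma dF_cast_succ (x i : ℕ) :
    ((x.descFactorial (i + 1) : ℤ)) = ((x : ℤ) - i) * x.descFactorial i := by
  rcases lt_or_ge i x with h | h
  · rw [Nat.descFactorial_succ, Nat.cast_mul, Nat.cast_sub h.le]
  · rcases eq_or_lt_of_le h with h' | h'
    · subst h'
      simp [Nat.descFactorial_eq_zero_iff_lt]
    · have h1 : x.descFactorial (i + 1) = 0 := Nat.descFactorial_eq_zero_iff_lt.2 (by omega)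
      have h2 : x.descFactorial i = 0 := Nat.descFactorial_eq_zero_iff_lt.2 h'
      simp [h1, h2]

private lemma choose_le_two_pow' (n k : ℕ) : n.choose k ≤ 2 ^ n := by
  rcases le_or_gt k n with h | h
  · calc n.choose k ≤ ∑ i ∈ range (n + 1), n.choose i :=
          Finset.single_le_sum (fun i _ => Nat.zero_le _) (mem_range.2 (by omega))
    _ = 2 ^ n := Nat.sum_range_choose n
  · rw [Nat.choose_eq_zero_of_lt h]; positivity

private lemma key (x m : ℕ) (hm : 1 ≤ m) :
    ∑ i ∈ range (m + 1),
      (-1 : ℤ) ^ i * (m.choose i) * x.descFactorial i * x.ascFactorial (m - i) = 0 := by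
  induction m, hm using Nat.le_induction with
  | base =>
      simp only [Finset.sum_range_succ, Finset.sum_range_zero, Nat.ascFactorial_succ,
        Nat.ascFactorial_zero, Nat.descFactorial_one, Nat.descFactorial_zero,
        Nat.choose_self, Nat.choose_zero_right, Nat.sub_self, Nat.sub_zero]
      push_cast
      ring
  | succ m hm ih =>
      set g' : ℕ → ℤ := fun i =>
        (-1 : ℤ) ^ i * (m.choose i) * x.descFactorial i * x.ascFactorial (m + 1 - i) with hg'
      have tel : ∑ i ∈ range (m + 1), (g' (i + 1) - g' i) = g' (m + 1) - g' 0 :=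
        Finset.sum_range_sub g' (m + 1)
      have hgm1 : g' (m + 1) = 0 := by
        simp [hg', Nat.choose_succ_self]
      have hg0 : g' 0 = x.ascFactorial (m + 1) := by simp [hg']
      rw [Finset.sum_range_succ']
      have step : ∀ i ∈ range (m + 1),
          (-1 : ℤ) ^ (i + 1) * ((m + 1).choose (i + 1)) * x.descFactorial (i + 1) *
              x.ascFactorial (m + 1 - (i + 1))
            = (m : ℤ) * ((-1 : ℤ) ^ i * (m.choose i) * x.descFactorial i *
                x.ascFactorial (m - i)) + (g' (i + 1) - g' i) := by
        intro i hi
        have him : i ≤ m := by simpa using Nat.lt_succ_iff.mp (mem_range.mp hi)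
        have h1 : m + 1 - (i + 1) = m - i := by omega
        have h2 : m + 1 - i = (m - i) + 1 := by omega
        have hasc : ((x.ascFactorial ((m - i) + 1) : ℤ))
            = ((x : ℤ) + (m - i : ℕ)) * x.ascFactorial (m - i) := by
          rw [Nat.ascFactorial_succ]; push_cast; ring
        have hch : ((m + 1).choose (i + 1) : ℤ) = (m.choose i : ℤ) + (m.choose (i + 1) : ℤ) := by
          rw [Nat.choose_succ_succ]; push_cast; ring
        have hmi : ((m - i : ℕ) : ℤ) = (m : ℤ) - i := by omega
        simp only [hg', h1, h2, hch, hasc, dF_cast_succ]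
        push_cast [hmi]
        ring
      rw [Finset.sum_congr rfl step, Finset.sum_add_distrib, tel, hgm1, hg0, ← Finset.mul_sum, ih]
      simp

private lemma identI (q r j m : ℕ) (hjm : j + m = r) (hrq : r < q) :
    ∑ i ∈ range (m + 1),
        ((m.choose i : ℤ) * (((q - m).choose (j + i)) : ℤ) * cc q r (j + i))
      = if m = 0 then (q.descFactorial r : ℤ) else 0 := by
  rcases Nat.eq_zero_or_pos m with hm | hm
  · subst hm
    have hj : j = r := by omega
    subst hj
    rw [if_pos rfl, Finset.sum_range_one]
    simp only [cc, Nat.add_zero, Nat.choose_zero_right, Nat.sub_self, pow_zero,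
      Nat.descFactorial_zero, Nat.sub_zero, Nat.cast_one, one_mul, mul_one]
    rw [Nat.descFactorial_eq_factorial_mul_choose]
    push_cast
    ring
  · rw [if_neg (by omega)]
    set x := q - r with hx
    set K : ℤ := ((q - m).descFactorial (r - m) : ℤ) with hK
    have main : ∀ i ∈ range (m + 1),
        ((m.choose i : ℤ) * (((q - m).choose (j + i)) : ℤ) * cc q r (j + i))
          = ((-1 : ℤ) ^ m * K) *
            ((-1 : ℤ) ^ i * (m.choose i) * x.descFactorial i * x.ascFactorial (m - i)) := by
      intro i hi
      have him : i ≤ m := by simpa using Nat.lt_succ_iff.mp (mem_range.mp hi)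
      have h1 : r - (j + i) = m - i := by omega
      have h2 : q - 1 - (j + i) = x + (m - i) - 1 := by omega
      have h3 : j + i = (r - m) + i := by omega
      have h4 : (q - m) - (r - m) = x := by omega
      have hdf : ((q - m).descFactorial (j + i) : ℤ)
          = ((j + i).factorial : ℤ) * ((q - m).choose (j + i)) := by
        rw [Nat.descFactorial_eq_factorial_mul_choose]; push_cast; ring
      have hsplit : ((q - m).descFactorial (j + i) : ℤ) = K * (x.descFactorial i : ℤ) := by
        rw [h3, dF_add, h4]; push_cast; ring
      have hasc : ((q - 1 - (j + i)).descFactorial (m - i) : ℤ)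
          = (x.ascFactorial (m - i) : ℤ) := by
        rw [h2, Nat.add_descFactorial_eq_ascFactorial']
      have hsign : ((-1 : ℤ)) ^ (m - i) = (-1 : ℤ) ^ m * (-1 : ℤ) ^ i := by
        have hmm : m - i + (i + i) = m + i := by omega
        calc ((-1 : ℤ)) ^ (m - i) = (-1 : ℤ) ^ (m - i) * ((-1 : ℤ) ^ (i + i)) := by
              rw [Even.neg_one_pow ⟨i, rfl⟩, mul_one]
        _ = (-1 : ℤ) ^ (m + i) := by rw [← pow_add, hmm]
        _ = (-1 : ℤ) ^ m * (-1 : ℤ) ^ i := by rw [pow_add]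
      have hkey : ((j + i).factorial : ℤ) * ((q - m).choose (j + i))
          = K * (x.descFactorial i : ℤ) := hdf ▸ hsplit
      simp only [cc, h1, hasc, hsign]
      linear_combination
        ((-1 : ℤ) ^ m * (-1 : ℤ) ^ i * (m.choose i) * (x.ascFactorial (m - i))) * hkey
    rw [Finset.sum_congr rfl main, ← Finset.mul_sum, key x m hm, mul_zero]

private lemma fiber_card {α : Type*} [Fintype α] [DecidableEq α]
    (q r : ℕ) (hcard : Fintype.card α = q + r) (hrq : r < q)
    (e e' A : Finset α) (he : e.card = r) (he' : e'.card = r)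
    (hA : A ⊆ e) (hAe' : e ∩ e' ⊆ A) :
    (univ.filter (fun Q : Finset α => (Q.card = q ∧ e' ⊆ Q) ∧ Q ∩ e = A)).card
      = (q - (r - (e ∩ e').card)).choose A.card := by
  set j := (e ∩ e').card with hj
  have hjr : j ≤ r := he ▸ Finset.card_le_card (Finset.inter_subset_left)
  set m := r - j with hm
  have hAE : A ∩ e' = e ∩ e' := by
    apply subset_antisymm
    · intro a ha
      simp only [mem_inter] at *
      exact ⟨hA ha.1, ha.2⟩
    · intro a ha
      simp only [mem_inter] at *
      exact ⟨hAe' (by simp [mem_inter, ha.1, ha.2]), ha.2⟩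
  have hout : ((e ∪ e')ᶜ : Finset α).card = q - m := by
    have h1 : (e ∪ e').card + j = r + r := by
      rw [hj, Finset.card_union_add_card_inter, he, he']
    have h2 : ((e ∪ e')ᶜ : Finset α).card = Fintype.card α - (e ∪ e').card :=
      Finset.card_compl _
    have h3 : (e ∪ e').card ≤ Fintype.card α := Finset.card_le_univ _
    omega
  have hu : (A ∪ e').card + j = A.card + r := by
    rw [hj, ← hAE, Finset.card_union_add_card_inter, he']
  have hAsub : A ∪ e' ⊆ e ∪ e' := Finset.union_subset_union_left hA
  rcases le_or_gt (A ∪ e').card q with hle | hlt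
  · have hb : (univ.filter (fun Q : Finset α => (Q.card = q ∧ e' ⊆ Q) ∧ Q ∩ e = A)).card
        = (Finset.powersetCard (q - (A ∪ e').card) ((e ∪ e')ᶜ : Finset α)).card := by
      apply Finset.card_nbij' (fun Q => Q \ (e ∪ e')) (fun B => B ∪ (A ∪ e'))
      · intro Q hQ
        simp only [mem_coe, mem_filter, mem_univ, true_and] at hQ
        obtain ⟨⟨hQcard, hQe'⟩, hQe⟩ := hQ
        have hint : Q ∩ (e ∪ e') = A ∪ e' := by
          rw [Finset.inter_union_distrib_left, hQe, Finset.inter_eq_right.2 hQe']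
        rw [Finset.mem_coe, Finset.mem_powersetCard]
        constructor
        · intro a ha
          simp only [mem_sdiff] at ha
          simpa using ha.2
        · have h4 := Finset.card_inter_add_card_sdiff Q (e ∪ e')
          rw [hint, hQcard] at h4
          beta_reduce
          omega
      · intro B hB
        rw [Finset.mem_coe, Finset.mem_powersetCard] at hB
        obtain ⟨hBsub, hBcard⟩ := hB
        have hdisj : Disjoint B (A ∪ e') := by
          rw [Finset.disjoint_left]
          intro a haB haA
          have := hBsub haB
          simp only [mem_compl] at this
          exact this (hAsub haA)
        simp only [mem_coe, mem_filter, mem_univ, true_and]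
        refine ⟨⟨?_, ?_⟩, ?_⟩
        · rw [Finset.card_union_of_disjoint hdisj, hBcard]
          omega
        · exact Finset.Subset.trans Finset.subset_union_right Finset.subset_union_right
        · ext a
          have hBe : a ∈ B → a ∉ e ∧ a ∉ e' := by
            intro haB
            have := hBsub haB
            simp only [mem_compl, mem_union] at this
            tauto
          have hAe : a ∈ A → a ∈ e := fun h => hA h
          have he'A : a ∈ e' → a ∈ e → a ∈ A := fun h1 h2 =>
            hAe' (by simp [mem_inter, h1, h2])
          simp only [mem_inter, mem_union]
          tauto
      · intro Q hQ
        simp only [mem_coe, mem_filter, mem_univ, true_and] at hQ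
        obtain ⟨⟨hQcard, hQe'⟩, hQe⟩ := hQ
        have hint : Q ∩ (e ∪ e') = A ∪ e' := by
          rw [Finset.inter_union_distrib_left, hQe, Finset.inter_eq_right.2 hQe']
        beta_reduce
        rw [← hint, Finset.sdiff_union_inter]
      · intro B hB
        rw [Finset.mem_coe, Finset.mem_powersetCard] at hB
        obtain ⟨hBsub, hBcard⟩ := hB
        ext a
        have hBe : a ∈ B → a ∉ e ∧ a ∉ e' := by
          intro haB
          have := hBsub haB
          simp only [mem_compl, mem_union] at this
          tauto
        have hAe : a ∈ A → a ∈ e := fun h => hA h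
        simp only [mem_sdiff, mem_union]
        tauto
    rw [hb, Finset.card_powersetCard, hout]
    have h5 : q - (A ∪ e').card = (q - m) - A.card := by omega
    have h6 : A.card ≤ q - m := by omega
    rw [h5, Nat.choose_symm h6]
  · have hempty : (univ.filter (fun Q : Finset α => (Q.card = q ∧ e' ⊆ Q) ∧ Q ∩ e = A)) = ∅ := by
      rw [Finset.filter_eq_empty_iff]
      intro Q _
      rintro ⟨⟨hQcard, hQe'⟩, hQe⟩
      have : A ∪ e' ⊆ Q := Finset.union_subset (hQe ▸ Finset.inter_subset_left) hQe'
      have := Finset.card_le_card this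
      omega
    rw [hempty, Finset.card_empty, Nat.choose_eq_zero_of_lt (by omega)]

theorem stmt2 (q r : ℕ) (hqr : r < q) (hr : 1 ≤ r)
    (e : Finset (Fin (q + r))) (he : e.card = r) :
    ∃ Ψ : Finset (Fin (q + r)) → ℤ,
      (∀ e' : Finset (Fin (q + r)), e'.card = r →
        ∑ Q ∈ univ.filter (fun Q : Finset (Fin (q + r)) => Q.card = q ∧ e' ⊆ Q), Ψ Q
          = if e' = e then (q.descFactorial r : ℤ) else 0) ∧
      ∀ Q : Finset (Fin (q + r)), |Ψ Q| ≤ 2 ^ q * r.factorial := by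
  classical
  refine ⟨fun Q => cc q r (Q ∩ e).card, ?_, ?_⟩
  · intro e' he'
    have hcard : Fintype.card (Fin (q + r)) = q + r := Fintype.card_fin _
    set j := (e ∩ e').card with hj
    set m := (e \ e').card with hm
    have hjm : j + m = r := by
      rw [hj, hm, Finset.card_inter_add_card_sdiff, he]
    have hjr : j ≤ r := by omega
    have step1 : ∑ Q ∈ univ.filter
          (fun Q : Finset (Fin (q + r)) => Q.card = q ∧ e' ⊆ Q), cc q r (Q ∩ e).card
        = ∑ A ∈ e.powerset, ∑ Q ∈ univ.filter
            (fun Q : Finset (Fin (q + r)) => (Q.card = q ∧ e' ⊆ Q) ∧ Q ∩ e = A),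
              cc q r (Q ∩ e).card := by
      rw [← Finset.sum_fiberwise_of_maps_to (t := e.powerset) (g := fun Q => Q ∩ e)
        (fun Q _ => Finset.mem_powerset.2 Finset.inter_subset_right)
        (fun Q => cc q r (Q ∩ e).card)]
      apply Finset.sum_congr rfl
      intro A _
      rw [Finset.filter_filter]
    rw [step1]
    have step2 : ∀ A ∈ e.powerset,
        (∑ Q ∈ univ.filter
            (fun Q : Finset (Fin (q + r)) => (Q.card = q ∧ e' ⊆ Q) ∧ Q ∩ e = A),
              cc q r (Q ∩ e).card)
          = ((univ.filter
              (fun Q : Finset (Fin (q + r)) => (Q.card = q ∧ e' ⊆ Q) ∧ Q ∩ e = A)).card : ℤ)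
              * cc q r A.card := by
      intro A _
      rw [Finset.sum_congr rfl (fun Q hQ => by
        rw [(Finset.mem_filter.mp hQ).2.2]), Finset.sum_const, nsmul_eq_mul]
    rw [Finset.sum_congr rfl step2]
    have hempty : ∀ A ∈ e.powerset, ¬ (e ∩ e' ⊆ A) →
        (univ.filter
          (fun Q : Finset (Fin (q + r)) => (Q.card = q ∧ e' ⊆ Q) ∧ Q ∩ e = A)) = ∅ := by
      intro A _ hnA
      rw [Finset.filter_eq_empty_iff]
      rintro Q _ ⟨⟨_, hQe'⟩, hQe⟩
      apply hnA
      intro a ha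
      rw [Finset.mem_inter] at ha
      rw [← hQe, Finset.mem_inter]
      exact ⟨hQe' ha.2, ha.1⟩
    have step3 : ∑ A ∈ e.powerset,
          ((univ.filter
            (fun Q : Finset (Fin (q + r)) => (Q.card = q ∧ e' ⊆ Q) ∧ Q ∩ e = A)).card : ℤ)
            * cc q r A.card
        = ∑ A ∈ e.powerset.filter (fun A => e ∩ e' ⊆ A),
          ((q - m).choose A.card : ℤ) * cc q r A.card := by
      rw [← Finset.sum_filter_of_ne (p := fun A => e ∩ e' ⊆ A) (fun A hA hne => by
        by_contra hnA
        rw [hempty A hA hnA] at hne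
        simp at hne)]
      apply Finset.sum_congr rfl
      intro A hA
      rw [Finset.mem_filter] at hA
      rw [fiber_card q r hcard hqr e e' A he he'
        (Finset.mem_powerset.mp hA.1) hA.2]
      have hrjm : r - j = m := by omega
      rw [hj] at hrjm
      rw [hrjm]
    rw [step3]
    have step4 : ∑ A ∈ e.powerset.filter (fun A => e ∩ e' ⊆ A),
          ((q - m).choose A.card : ℤ) * cc q r A.card
        = ∑ B ∈ (e \ e').powerset,
          ((q - m).choose (B.card + j) : ℤ) * cc q r (B.card + j) := by
      apply Finset.sum_nbij' (fun A => A \ e') (fun B => B ∪ (e ∩ e'))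
      · intro A hA
        rw [Finset.mem_filter, Finset.mem_powerset] at hA
        exact Finset.mem_powerset.2 (Finset.sdiff_subset_sdiff hA.1 Finset.Subset.rfl)
      · intro B hB
        rw [Finset.mem_powerset] at hB
        rw [Finset.mem_filter, Finset.mem_powerset]
        refine ⟨Finset.union_subset (hB.trans Finset.sdiff_subset) Finset.inter_subset_left,
          Finset.subset_union_right⟩
      · intro A hA
        rw [Finset.mem_filter, Finset.mem_powerset] at hA
        ext a
        have h1 : a ∈ A → a ∈ e := fun h => hA.1 h
        have h2 : a ∈ e → a ∈ e' → a ∈ A := fun x y => hA.2 (Finset.mem_inter.2 ⟨x, y⟩)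
        simp only [Finset.mem_union, Finset.mem_sdiff, Finset.mem_inter]
        tauto
      · intro B hB
        rw [Finset.mem_powerset] at hB
        ext a
        have h1 : a ∈ B → a ∈ e ∧ a ∉ e' := fun h => Finset.mem_sdiff.mp (hB h)
        simp only [Finset.mem_union, Finset.mem_sdiff, Finset.mem_inter]
        tauto
      · intro A hA
        rw [Finset.mem_filter, Finset.mem_powerset] at hA
        have hAE : A ∩ e' = e ∩ e' := by
          apply subset_antisymm
          · intro a ha
            rw [Finset.mem_inter] at *
            exact ⟨hA.1 ha.1, ha.2⟩
          · intro a ha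
            rw [Finset.mem_inter] at ha ⊢
            exact ⟨hA.2 (Finset.mem_inter.2 ha), ha.2⟩
        have hc : (A \ e').card + j = A.card := by
          have := Finset.card_inter_add_card_sdiff A e'
          rw [hAE, ← hj] at this
          omega
        rw [hc]
    rw [step4]
    have step5 : ∑ B ∈ (e \ e').powerset,
          ((q - m).choose (B.card + j) : ℤ) * cc q r (B.card + j)
        = ∑ i ∈ range (m + 1),
            ((m.choose i : ℤ) * (((q - m).choose (j + i)) : ℤ) * cc q r (j + i)) := by
      rw [Finset.sum_powerset, ← hm]
      apply Finset.sum_congr rfl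
      intro i _
      rw [Finset.sum_congr rfl (fun B hB => by
        rw [(Finset.mem_powersetCard.mp hB).2, Nat.add_comm i j]),
        Finset.sum_const, Finset.card_powersetCard, ← hm, nsmul_eq_mul]
      push_cast
      ring
    rw [step5, identI q r j m hjm hqr]
    congr 1
    have : e' = e ↔ m = 0 := by
      constructor
      · rintro rfl
        rw [hm, Finset.card_eq_zero, Finset.sdiff_eq_empty_iff_subset]
      · intro h0
        rw [hm, Finset.card_eq_zero, Finset.sdiff_eq_empty_iff_subset] at h0
        exact (Finset.eq_of_subset_of_card_le h0 (by rw [he, he'])).symm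
    simp [this]
  · intro Q
    set a := (Q ∩ e).card with ha
    have har : a ≤ r := he ▸ Finset.card_le_card Finset.inter_subset_right
    have habs : |cc q r a| = ((a.factorial * (q - 1 - a).descFactorial (r - a) : ℕ) : ℤ) := by
      rw [cc, abs_mul, abs_mul, abs_pow, abs_neg, abs_one, one_pow, one_mul,
        Nat.abs_cast, Nat.abs_cast]
      push_cast
      ring
    rw [habs]
    have hnat : a.factorial * (q - 1 - a).descFactorial (r - a) ≤ 2 ^ q * r.factorial := by
      rw [Nat.descFactorial_eq_factorial_mul_choose, ← Nat.mul_assoc]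
      have h1 : a.factorial * (r - a).factorial ≤ r.factorial :=
        Nat.le_of_dvd (Nat.factorial_pos r)
          (Nat.factorial_mul_factorial_dvd_factorial har)
      have h2 : (q - 1 - a).choose (r - a) ≤ 2 ^ q :=
        (choose_le_two_pow' _ _).trans (Nat.pow_le_pow_right (by norm_num) (by omega))
      calc a.factorial * (r - a).factorial * ((q - 1 - a).choose (r - a))
          ≤ r.factorial * 2 ^ q := Nat.mul_le_mul h1 h2
        _ = 2 ^ q * r.factorial := Nat.mul_comm _ _
    calc ((a.factorial * (q - 1 - a).descFactorial (r - a) : ℕ) : ℤ)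
        ≤ ((2 ^ q * r.factorial : ℕ) : ℤ) := by exact_mod_cast hnat
      _ = 2 ^ q * r.factorial := by push_cast; ring
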